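/- For $z = (r e^{i\phi}, r, s, s)$ with $r, s \ge 0$, $\|z\|_{\mathsf{X}} = 2\sqrt{r^2 + s^2 + 2rs|\cos(\phi/2)|}$. -/

import Mathlib

open Complex Real

noncomputable def Xfun (z : Fin 4 → ℂ) (σ : ℝ) : ℝ :=
  ‖z 0 * Complex.exp (σ * Complex.I) + (starRingEnd ℂ) (z 3)‖ +
  ‖z 1 * Complex.exp (σ * Complex.I) + (starRingEnd ℂ) (z 2)‖

noncomputable def Xnorm (z : Fin 4 → ℂ) : ℝ := ⨆ σ : ℝ, Xfun z σ

noncomputable def phase (z : Fin 4 → ℂ) : ℝ :=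
  (Complex.arg (z 0) + Complex.arg (z 3)) - (Complex.arg (z 1) + Complex.arg (z 2))

lemma abs_aux (r s θ : ℝ) :
    ‖(r : ℂ) * Complex.exp (θ * Complex.I) + (s : ℂ)‖ =
    Real.sqrt (r ^ 2 + s ^ 2 + 2 * r * s * Real.cos θ) := by
  rw [Complex.norm_def]
  congr 1
  rw [Complex.normSq_apply]
  simp [Complex.add_re, Complex.add_im, Complex.mul_re, Complex.mul_im,
    Complex.exp_ofReal_mul_I_re, Complex.exp_ofReal_mul_I_im]
  nlinarith [Real.sin_sq_add_cos_sq θ]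

lemma xfun_eq (r s φ σ : ℝ) :
    Xfun ![(r : ℂ) * Complex.exp (φ * Complex.I), (r : ℂ), (s : ℂ), (s : ℂ)] σ =
      Real.sqrt (r ^ 2 + s ^ 2 + 2 * r * s * Real.cos (σ + φ)) +
      Real.sqrt (r ^ 2 + s ^ 2 + 2 * r * s * Real.cos σ) := by
  have h1 : (r : ℂ) * Complex.exp (φ * Complex.I) * Complex.exp (σ * Complex.I)
      = (r : ℂ) * Complex.exp (((σ + φ) : ℝ) * Complex.I) := by
    rw [mul_assoc, ← Complex.exp_add]
    push_cast
    ring_nf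
  simp only [Xfun, Matrix.cons_val_zero, Matrix.cons_val_one, Matrix.head_cons,
    Matrix.cons_val_two, Matrix.tail_cons, Matrix.cons_val_three, Complex.conj_ofReal, h1]
  rw [abs_aux, abs_aux]

lemma sqrt_add_sqrt_le (x y M : ℝ) (hx : 0 ≤ x) (hy : 0 ≤ y) (hM : 0 ≤ M)
    (h : x + y ≤ 2 * M) : Real.sqrt x + Real.sqrt y ≤ 2 * Real.sqrt M := by
  have hsx := Real.sqrt_nonneg x
  have hsy := Real.sqrt_nonneg y
  have hsM := Real.sqrt_nonneg M
  have ex : Real.sqrt x ^ 2 = x := Real.sq_sqrt hx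
  have ey : Real.sqrt y ^ 2 = y := Real.sq_sqrt hy
  have eM : Real.sqrt M ^ 2 = M := Real.sq_sqrt hM
  nlinarith [sq_nonneg (Real.sqrt x - Real.sqrt y),
    sq_nonneg (Real.sqrt x + Real.sqrt y - 2 * Real.sqrt M),
    mul_nonneg hsM (add_nonneg hsx hsy)]

lemma xfun_le (r s φ : ℝ) (hr : 0 ≤ r) (hs : 0 ≤ s) (σ : ℝ) :
    Xfun ![(r : ℂ) * Complex.exp (φ * Complex.I), (r : ℂ), (s : ℂ), (s : ℂ)] σ ≤
      2 * Real.sqrt (r ^ 2 + s ^ 2 + 2 * r * s * |Real.cos (φ / 2)|) := by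
  rw [xfun_eq]
  have hrs : 0 ≤ r * s := mul_nonneg hr hs
  have h2 : Real.cos (σ + φ) + Real.cos σ ≤ 2 * |Real.cos (φ / 2)| := by
    have hc : Real.cos (σ + φ) + Real.cos σ =
        2 * Real.cos ((σ + φ + σ) / 2) * Real.cos ((σ + φ - σ) / 2) := Real.cos_add_cos _ _
    have h1 : Real.cos ((σ + φ + σ) / 2) * Real.cos ((σ + φ - σ) / 2) ≤ |Real.cos (φ / 2)| := by
      have he : (σ + φ - σ) / 2 = φ / 2 := by ring
      rw [he]
      calc Real.cos ((σ + φ + σ) / 2) * Real.cos (φ / 2)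
          ≤ |Real.cos ((σ + φ + σ) / 2) * Real.cos (φ / 2)| := le_abs_self _
        _ = |Real.cos ((σ + φ + σ) / 2)| * |Real.cos (φ / 2)| := abs_mul _ _
        _ ≤ 1 * |Real.cos (φ / 2)| := by gcongr; exact Real.abs_cos_le_one _
        _ = |Real.cos (φ / 2)| := one_mul _
    rw [hc]; linarith
  refine sqrt_add_sqrt_le _ _ _ ?_ ?_ (by positivity) ?_
  · nlinarith [Real.neg_one_le_cos (σ + φ), sq_nonneg (r - s)]
  · nlinarith [Real.neg_one_le_cos σ, sq_nonneg (r - s)]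
  · nlinarith [mul_le_mul_of_nonneg_left h2 hrs]

theorem stmt_9 (r s φ : ℝ) (hr : 0 ≤ r) (hs : 0 ≤ s) :
    Xnorm ![(r : ℂ) * Complex.exp (φ * Complex.I), (r : ℂ), (s : ℂ), (s : ℂ)] =
      2 * Real.sqrt (r ^ 2 + s ^ 2 + 2 * r * s * |Real.cos (φ / 2)|) := by
  have hbdd : BddAbove (Set.range
      (Xfun ![(r : ℂ) * Complex.exp (φ * Complex.I), (r : ℂ), (s : ℂ), (s : ℂ)])) :=
    ⟨_, by rintro _ ⟨σ, rfl⟩; exact xfun_le r s φ hr hs σ⟩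
  apply le_antisymm
  · exact ciSup_le (xfun_le r s φ hr hs)
  · rcases le_or_gt 0 (Real.cos (φ / 2)) with h | h
    · have key : Xfun ![(r : ℂ) * Complex.exp (φ * Complex.I), (r : ℂ), (s : ℂ), (s : ℂ)]
          (-(φ / 2)) = 2 * Real.sqrt (r ^ 2 + s ^ 2 + 2 * r * s * |Real.cos (φ / 2)|) := by
        rw [xfun_eq]
        have e1 : -(φ / 2) + φ = φ / 2 := by ring
        rw [e1, Real.cos_neg, _root_.abs_of_nonneg h]
        ring
      rw [← key]
      exact le_ciSup hbdd _
    · have key : Xfun ![(r : ℂ) * Complex.exp (φ * Complex.I), (r : ℂ), (s : ℂ), (s : ℂ)]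
          (Real.pi - φ / 2) = 2 * Real.sqrt (r ^ 2 + s ^ 2 + 2 * r * s * |Real.cos (φ / 2)|) := by
        rw [xfun_eq]
        have e1 : Real.pi - φ / 2 + φ = Real.pi - -(φ / 2) := by ring
        rw [e1, Real.cos_pi_sub, Real.cos_pi_sub, Real.cos_neg, abs_of_neg h]
        ring
      rw [← key]
      exact le_ciSup hbdd _
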